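/- Let a, x be real numbers with −1 < a < x and set α := (x − a)/(1 + a). Then α > 0 and ((1+x)/(x−a)) · log((1+x)/(1+a)) = ((1+α)/α) · log(1+α). Consequently, with β := ((1+α)/α)·log(1+α), the hyperplane-approximation error satisfies e(a, x) = β − log β − 1; in particular e(a, x) depends on (a, x) only through the ratio α = (x − a)/(1 + a). -/

import Mathlib

/-- The hyperplane-approximation error between tangency points `a < x` (with `a > −1`). -/
noncomputable def hyperErr (a x : ℝ) : ℝ :=
  ((1 + x) / (x - a)) * Real.log ((1 + x) / (1 + a))
    - Real.log (((1 + x) / (x - a)) * Real.log ((1 + x) / (1 + a))) - 1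

/-- Scale invariance of the hyperplane-approximation error: with
`α = (x − a)/(1 + a) > 0` and `β = ((1+α)/α)·log(1+α)`, one has
`((1+x)/(x−a))·log((1+x)/(1+a)) = β` and `e(a, x) = β − log β − 1`;
so `e(a, x)` depends on `(a, x)` only through the ratio `α`. -/
theorem hyperErr_scale_invariance
    (a x : ℝ) (ha : -1 < a) (hax : a < x)
    (α : ℝ) (hα : α = (x - a) / (1 + a)) :
    0 < α
    ∧ ((1 + x) / (x - a)) * Real.log ((1 + x) / (1 + a))
        = ((1 + α) / α) * Real.log (1 + α)
    ∧ hyperErr a x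
        = ((1 + α) / α) * Real.log (1 + α)
          - Real.log (((1 + α) / α) * Real.log (1 + α)) - 1 := by
  have h1a : (0:ℝ) < 1 + a := by linarith
  have hxa : (0:ℝ) < x - a := by linarith
  have hαpos : 0 < α := hα ▸ div_pos hxa h1a
  have h1 : 1 + α = (1 + x) / (1 + a) := by
    rw [hα]; field_simp; ring
  have h2 : (1 + α) / α = (1 + x) / (x - a) := by
    rw [hα]; field_simp; ring
  have hkey : ((1 + x) / (x - a)) * Real.log ((1 + x) / (1 + a))
      = ((1 + α) / α) * Real.log (1 + α) := by
    rw [h2, h1]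
  exact ⟨hαpos, hkey, by rw [hyperErr, hkey]⟩
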